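/- A full set of triplets ℛ on a label set 𝒳 is compatible if and only if for every set of four labels {a, b, c, d} ⊆ 𝒳, ℛ contains neither the subset {ab|c, cd|b, bd|a} nor the subset {ab|c, cd|b, ad|b}. -/

import Mathlib

/-!
Common framework: rooted binary trees with leaves bijectively labeled by a
finite label set, leaf removal, restriction, the leaf-removal distance `d_LR`,
compatibility, leaf-disagreements, triplets, LPR moves, etc.
-/

universe u

/-- A rooted binary tree whose leaves carry labels from `α`. -/
inductive LTree (α : Type u) : Type u where
  | leaf : α → LTree α
  | node : LTree α → LTree α → LTree α

namespace LTree

variable {α : Type u} [DecidableEq α]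

/-- The set of leaf labels of a tree. -/
def labels : LTree α → Finset α
  | leaf a => {a}
  | node l r => labels l ∪ labels r

/-- A tree is `Good` when its leaves carry pairwise distinct labels
(i.e. the leaves are bijectively labeled). -/
def Good : LTree α → Prop
  | leaf _ => True
  | node l r => Good l ∧ Good r ∧ Disjoint (labels l) (labels r)

/-- `T` is a (rooted binary, uniquely leaf-labeled) tree on label set `𝒳`. -/
def IsTreeOn (T : LTree α) (𝒳 : Finset α) : Prop :=
  Good T ∧ labels T = 𝒳

/-- Equality of rooted trees: children of a node are unordered. -/
inductive Iso : LTree α → LTree α → Prop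
  | leaf (a : α) : Iso (leaf a) (leaf a)
  | node {l₁ r₁ l₂ r₂ : LTree α} :
      Iso l₁ l₂ → Iso r₁ r₂ → Iso (node l₁ r₁) (node l₂ r₂)
  | swap {l₁ r₁ l₂ r₂ : LTree α} :
      Iso l₁ r₂ → Iso r₁ l₂ → Iso (node l₁ r₁) (node l₂ r₂)

/-- Equality of possibly empty trees (`none` is the empty tree). -/
def OptIso : Option (LTree α) → Option (LTree α) → Prop
  | none, none => True
  | some t₁, some t₂ => Iso t₁ t₂
  | _, _ => False

/-- Restriction `T|_S`: keep exactly the leaves with labels in `S`, suppressing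
the resulting degree-two vertices and degree-one roots; the result is `none`
when no leaf survives. -/
def restrict : LTree α → Finset α → Option (LTree α)
  | leaf a, S => if a ∈ S then some (leaf a) else none
  | node l r, S =>
    match restrict l S, restrict r S with
    | some l', some r' => some (node l' r')
    | some l', none => some l'
    | none, some r' => some r'
    | none, none => none

/-- `T − X`: remove from `T` every leaf whose label lies in `X`. -/
def remove (T : LTree α) (X : Finset α) : Option (LTree α) :=
  restrict T (labels T \ X)

/-- The leaf-removal distance `d_LR(T₁,T₂)`: the minimum number of labels
whose removal makes the two trees equal. -/
noncomputable def dLR (T₁ T₂ : LTree α) : ℕ :=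
  sInf {n | ∃ X : Finset α, X ⊆ labels T₁ ∪ labels T₂ ∧ X.card = n ∧
    OptIso (remove T₁ X) (remove T₂ X)}

def labelsO : Option (LTree α) → Finset α
  | none => ∅
  | some t => labels t

def GoodO : Option (LTree α) → Prop
  | none => True
  | some t => Good t

def restrictO : Option (LTree α) → Finset α → Option (LTree α)
  | none, _ => none
  | some t, S => restrict t S

/-- A family of (possibly empty) trees is compatible if there is a single tree,
on the union of their label sets, which displays all of them. -/
def CompatibleFamO {ι : Type*} (f : ι → Option (LTree α)) : Prop :=
  ∃ TO : Option (LTree α), GoodO TO ∧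
    (↑(labelsO TO) : Set α) = (⋃ i, ↑(labelsO (f i))) ∧
    ∀ i, OptIso (restrictO TO (labelsO (f i))) (f i)

/-- A family of trees is compatible if a single tree displays all of them. -/
def CompatibleFam {ι : Type*} (𝒯 : ι → LTree α) : Prop :=
  CompatibleFamO fun i => some (𝒯 i)

/-- `X` is a leaf-disagreement for the family `𝒯`: removing `X i` from `𝒯 i`
yields a compatible family. -/
def IsLeafDisagreement {ι : Type*} (𝒯 : ι → LTree α) (X : ι → Finset α) : Prop :=
  CompatibleFamO fun i => remove (𝒯 i) (X i)

/-- `X'` is a label-disagreement for the family `𝒯`. -/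
def IsLabelDisagreement {ι : Type*} (𝒯 : ι → LTree α) (X' : Finset α) : Prop :=
  CompatibleFamO fun i => remove (𝒯 i) X'

/-- `MASTRL 𝒯`: the minimum size of a leaf-disagreement for `𝒯`. -/
noncomputable def MASTRL {t : ℕ} (𝒯 : Fin t → LTree α) : ℕ :=
  sInf {v | ∃ X : Fin t → Finset α, (∀ i, X i ⊆ labels (𝒯 i)) ∧
    (∑ i, (X i).card) = v ∧ IsLeafDisagreement 𝒯 X}

/-- The triplet `ab|c` (as a tree). -/
def tripletTree (a b c : α) : LTree α := node (node (leaf a) (leaf b)) (leaf c)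

/-- A rooted triplet: a tree with exactly three (distinctly labeled) leaves. -/
def IsTriplet (R : LTree α) : Prop := Good R ∧ (labels R).card = 3

/-- `ab|c` is a triplet of `T`, i.e. `T|_{a,b,c} = ab|c`. -/
def IsTripletOf (T : LTree α) (a b c : α) : Prop :=
  OptIso (restrict T {a, b, c}) (some (tripletTree a b c))

/-- `tr(T)`: the triplet decomposition of `T`. -/
def trSet (T : LTree α) : Set (LTree α) :=
  {R | ∃ a b c : α, R = tripletTree a b c ∧ IsTripletOf T a b c}

/-- A set of trees is compatible: some tree on the union of the label sets
displays every member. -/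
def CompatibleSet (S : Set (LTree α)) : Prop :=
  ∃ TO : Option (LTree α), GoodO TO ∧
    (↑(labelsO TO) : Set α) = (⋃ R ∈ S, ↑(labels R)) ∧
    ∀ R ∈ S, OptIso (restrictO TO (labels R)) (some R)

/-- `MINRTI ℛ`: the minimum number of triplets to delete from `ℛ` so that the
remaining triplets are compatible. -/
noncomputable def MINRTI {t : ℕ} (R : Fin t → LTree α) : ℕ :=
  sInf {m | ∃ s : Finset (Fin t), s.card = m ∧
    CompatibleFam (fun i : {i : Fin t // i ∉ s} => R i.1)}

/-- Graft the leaf `x` at the position (edge) addressed by `p` in `T`.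
The empty address grafts `x` above the root of `T` (the `⊥` case); the address
of an internal/leaf vertex `v` grafts `x` on the edge between `v` and its
parent.  `none` when the address is invalid. -/
def graftAt (x : α) : LTree α → List Bool → Option (LTree α)
  | T, [] => some (node (leaf x) T)
  | leaf _, _ :: _ => none
  | node l r, b :: p =>
    if b then (graftAt x l p).map (fun l' => node l' r)
    else (graftAt x r p).map (fun r' => node l r')

/-- `T'` is obtained from `T` by a single LPR (leaf prune-and-regraft) move on
the leaf `x`: prune `x` from `T` and regraft it, either on an edge of
`T − {x}` or above its root. -/
def LPRStep (x : α) (T T' : LTree α) : Prop :=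
  (remove T {x} = none ∧ T' = leaf x) ∨
  ∃ T₀ p, remove T {x} = some T₀ ∧ graftAt x T₀ p = some T'

/-- `TurnsInto L T T'`: the LPR sequence with (ordered) leaf list `L` turns
`T` into `T'`. -/
inductive TurnsInto : List α → LTree α → LTree α → Prop
  | nil {T T' : LTree α} : Iso T T' → TurnsInto [] T T'
  | cons {x : α} {xs : List α} {T T'' T' : LTree α} :
      LPRStep x T T'' → TurnsInto xs T'' T' → TurnsInto (x :: xs) T T'

/-- `confset(T₁,T₂)`: the collection of 3-label sets `{a,b,c}` such that
`T₁` contains a triplet on `{a,b,c}` conflicting with a triplet of `T₂`. -/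
def confset (T₁ T₂ : LTree α) : Set (Finset α) :=
  {s | ∃ a b c : α, s = {a, b, c} ∧ IsTripletOf T₁ a b c ∧
    (IsTripletOf T₂ a c b ∨ IsTripletOf T₂ b c a)}

/-- `X` is a minimal disagreement between `T₁` and `T₂`. -/
def MinimalDisagreement (T₁ T₂ : LTree α) (X : Finset α) : Prop :=
  X ⊆ labels T₁ ∪ labels T₂ ∧
  OptIso (remove T₁ X) (remove T₂ X) ∧
  ∀ X' ⊂ X, ¬ OptIso (remove T₁ X') (remove T₂ X')

/-- `u` is (the rooted subtree hanging at) a node of `T`. -/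
inductive IsSubtree : LTree α → LTree α → Prop
  | refl (T : LTree α) : IsSubtree T T
  | left {u l r : LTree α} : IsSubtree u l → IsSubtree u (node l r)
  | right {u l r : LTree α} : IsSubtree u r → IsSubtree u (node l r)

/-- `u` is the least common ancestor in `T` of the labels in `Z`. -/
def IsLCA (T : LTree α) (Z : Finset α) (u : LTree α) : Prop :=
  IsSubtree u T ∧ Z ⊆ labels u ∧
    ∀ w, IsSubtree w T → Z ⊆ labels w → IsSubtree u w

end LTree

open LTree

/-- `R` (with `R a b c` meaning "the triplet `ab|c` belongs to `ℛ`") is a full set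
of triplets on `𝒳`: it is symmetric in the first two arguments, supported on
distinct labels of `𝒳`, and contains exactly one triplet on each 3-subset of `𝒳`. -/
def FullTriplets {α : Type u} [DecidableEq α] (𝒳 : Finset α)
    (R : α → α → α → Prop) : Prop :=
  (∀ a b c, R a b c ↔ R b a c) ∧
  (∀ a b c, R a b c → a ∈ 𝒳 ∧ b ∈ 𝒳 ∧ c ∈ 𝒳 ∧ a ≠ b ∧ a ≠ c ∧ b ≠ c) ∧
  (∀ a b c, a ∈ 𝒳 → b ∈ 𝒳 → c ∈ 𝒳 → a ≠ b → a ≠ c → b ≠ c →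
    (R a b c ∧ ¬ R a c b ∧ ¬ R b c a) ∨
    (¬ R a b c ∧ R a c b ∧ ¬ R b c a) ∨
    (¬ R a b c ∧ ¬ R a c b ∧ R b c a))

/-- The set of triplets `R` is compatible: some tree on `𝒳` displays all of them. -/
def TripletsCompatible {α : Type u} [DecidableEq α] (𝒳 : Finset α)
    (R : α → α → α → Prop) : Prop :=
  ∃ T : LTree α, IsTreeOn T 𝒳 ∧ ∀ a b c, R a b c → IsTripletOf T a b c

set_option linter.unusedSectionVars false

namespace LTree

variable {α : Type u} [DecidableEq α]

theorem Iso.refl : ∀ t : LTree α, Iso t t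
  | .leaf a => .leaf a
  | .node l r => .node (Iso.refl l) (Iso.refl r)

theorem Iso.symm {t s : LTree α} (h : Iso t s) : Iso s t := by
  induction h with
  | leaf a => exact .leaf a
  | node h1 h2 ih1 ih2 => exact .node ih1 ih2
  | swap h1 h2 ih1 ih2 => exact .swap ih2 ih1

theorem Iso.trans {t s u : LTree α} (h1 : Iso t s) (h2 : Iso s u) : Iso t u := by
  induction h1 generalizing u with
  | leaf a => exact h2
  | node _ _ ih1 ih2 =>
    cases h2 with
    | node g1 g2 => exact .node (ih1 g1) (ih2 g2)
    | swap g1 g2 => exact .swap (ih1 g1) (ih2 g2)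
  | swap _ _ ih1 ih2 =>
    cases h2 with
    | node g1 g2 => exact .swap (ih1 g2) (ih2 g1)
    | swap g1 g2 => exact .node (ih1 g2) (ih2 g1)

theorem iso_leaf {a : α} {t : LTree α} (h : Iso (leaf a) t) : t = leaf a := by
  cases h; rfl

theorem not_iso_node_leaf {l r : LTree α} {a : α} (h : Iso (node l r) (leaf a)) : False := by
  cases h

theorem labels_nonempty : ∀ t : LTree α, (labels t).Nonempty
  | .leaf a => ⟨a, by simp [labels]⟩
  | .node l r => by
    obtain ⟨x, hx⟩ := labels_nonempty l
    exact ⟨x, by simp [labels, hx]⟩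

theorem labelsO_restrict (t : LTree α) (S : Finset α) :
    labelsO (restrict t S) = labels t ∩ S := by
  induction t with
  | leaf a =>
    by_cases ha : a ∈ S <;>
      simp [restrict, ha, labelsO, labels, Finset.singleton_inter_of_mem,
        Finset.singleton_inter_of_notMem]
  | node l r ihl ihr =>
    rw [restrict]
    rcases hl : restrict l S with _ | wl <;> rcases hr : restrict r S with _ | wr <;>
      rw [hl] at ihl <;> rw [hr] at ihr <;>
      simp [labelsO, labels, Finset.union_inter_distrib_right] at ihl ihr ⊢ <;>
      rw [← ihl, ← ihr] <;> simp

theorem restrict_eq_none {t : LTree α} {S : Finset α} (h : ∀ a ∈ labels t, a ∉ S) :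
    restrict t S = none := by
  induction t with
  | leaf a => simp [restrict, h a (by simp [labels])]
  | node l r ihl ihr =>
    have h1 : restrict l S = none := ihl (fun a ha => h a (by simp [labels, ha]))
    have h2 : restrict r S = none := ihr (fun a ha => h a (by simp [labels, ha]))
    simp [restrict, h1, h2]

theorem labels_of_restrict {t : LTree α} {S : Finset α} {w : LTree α}
    (h : restrict t S = some w) : labels w = labels t ∩ S := by
  have := labelsO_restrict t S
  rw [h] at this
  exact this

theorem good_restrict {t : LTree α} (ht : Good t) (S : Finset α) :
    GoodO (restrict t S) := by
  induction t with
  | leaf a => by_cases ha : a ∈ S <;> simp [restrict, ha, GoodO, Good]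
  | node l r ihl ihr =>
    obtain ⟨hgl, hgr, hdisj⟩ := ht
    have ihl := ihl hgl
    have ihr := ihr hgr
    rw [restrict]
    rcases hl : restrict l S with _ | wl <;> rcases hr : restrict r S with _ | wr <;>
      rw [hl] at ihl <;> rw [hr] at ihr <;> simp [GoodO] at ihl ihr ⊢ <;>
      try assumption
    refine ⟨ihl, ihr, ?_⟩
    have e1 := labels_of_restrict hl
    have e2 := labels_of_restrict hr
    rw [e1, e2]
    exact Finset.disjoint_of_subset_left Finset.inter_subset_left
      (Finset.disjoint_of_subset_right Finset.inter_subset_left hdisj)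

theorem restrict_node_left {l r : LTree α} {S : Finset α}
    (h : ∀ a ∈ labels r, a ∉ S) : restrict (node l r) S = restrict l S := by
  rw [restrict, restrict_eq_none h]
  rcases restrict l S with _ | wl <;> rfl

theorem restrict_node_right {l r : LTree α} {S : Finset α}
    (h : ∀ a ∈ labels l, a ∉ S) : restrict (node l r) S = restrict r S := by
  rw [restrict, restrict_eq_none h]
  rcases restrict r S with _ | wr <;> rfl

theorem restrict_singleton {t : LTree α} (ht : Good t) {S : Finset α} {c : α}
    (hc : c ∈ labels t) (hcS : c ∈ S) (h : ∀ a ∈ labels t, a ∈ S → a = c) :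
    restrict t S = some (leaf c) := by
  induction t with
  | leaf a =>
    have : c = a := by simpa [labels] using hc
    subst this
    simp [restrict, hcS]
  | node l r ihl ihr =>
    obtain ⟨hgl, hgr, hdisj⟩ := ht
    rcases (by simpa [labels] using hc : c ∈ labels l ∨ c ∈ labels r) with h1 | h1
    · rw [restrict_node_left, ihl hgl h1 (fun a ha => h a (by simp [labels, ha]))]
      intro a ha haS
      have := h a (by simp [labels, ha]) haS
      subst this
      exact Finset.disjoint_left.mp hdisj h1 ha
    · rw [restrict_node_right, ihr hgr h1 (fun a ha => h a (by simp [labels, ha]))]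
      intro a ha haS
      have := h a (by simp [labels, ha]) haS
      subst this
      exact Finset.disjoint_left.mp hdisj ha h1

theorem restrict_pair {t : LTree α} (ht : Good t) {S : Finset α} {p q : α}
    (hpq : p ≠ q) (hp : p ∈ labels t) (hq : q ∈ labels t) (hpS : p ∈ S) (hqS : q ∈ S)
    (h : ∀ a ∈ labels t, a ∈ S → a = p ∨ a = q) :
    restrict t S = some (node (leaf p) (leaf q)) ∨
    restrict t S = some (node (leaf q) (leaf p)) := by
  induction t with
  | leaf a =>
    exfalso
    have h1 : p = a := by simpa [labels] using hp
    have h2 : q = a := by simpa [labels] using hq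
    exact hpq (h1.trans h2.symm)
  | node l r ihl ihr =>
    obtain ⟨hgl, hgr, hdisj⟩ := ht
    have hmem : ∀ a ∈ labels (node l r), (a ∈ labels l ∨ a ∈ labels r) := by
      intro a ha; simpa [labels] using ha
    rcases hmem p hp with hpl | hpl <;> rcases hmem q hq with hql | hql
    · -- both in l
      rw [restrict_node_left]
      · exact ihl hgl hpl hql (fun a ha => h a (by simp [labels, ha]))
      · intro a ha haS
        rcases h a (by simp [labels, ha]) haS with rfl | rfl
        · exact Finset.disjoint_left.mp hdisj hpl ha
        · exact Finset.disjoint_left.mp hdisj hql ha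
    · -- p in l, q in r
      left
      rw [restrict,
        restrict_singleton hgl hpl hpS (fun a ha haS => by
          rcases h a (by simp [labels, ha]) haS with rfl | rfl
          · rfl
          · exact absurd ha (Finset.disjoint_right.mp hdisj hql)),
        restrict_singleton hgr hql hqS (fun a ha haS => by
          rcases h a (by simp [labels, ha]) haS with rfl | rfl
          · exact absurd ha (Finset.disjoint_left.mp hdisj hpl)
          · rfl)]
    · -- q in l, p in r
      right
      rw [restrict,
        restrict_singleton hgl hql hqS (fun a ha haS => by
          rcases h a (by simp [labels, ha]) haS with rfl | rfl
          · exact absurd ha (Finset.disjoint_right.mp hdisj hpl)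
          · rfl),
        restrict_singleton hgr hpl hpS (fun a ha haS => by
          rcases h a (by simp [labels, ha]) haS with rfl | rfl
          · rfl
          · exact absurd ha (Finset.disjoint_left.mp hdisj hql))]
    · -- both in r
      rw [restrict_node_right]
      · exact ihr hgr hpl hql (fun a ha => h a (by simp [labels, ha]))
      · intro a ha haS
        rcases h a (by simp [labels, ha]) haS with rfl | rfl
        · exact Finset.disjoint_right.mp hdisj hpl ha
        · exact Finset.disjoint_right.mp hdisj hql ha

end LTree
namespace LTree

variable {α : Type u} [DecidableEq α]

theorem iso_trip {a b c p q r : α}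
    (h : Iso (tripletTree a b c) (tripletTree p q r)) :
    c = r ∧ ((a = p ∧ b = q) ∨ (a = q ∧ b = p)) := by
  unfold tripletTree at h
  cases h with
  | node h1 h2 =>
    cases h2
    refine ⟨rfl, ?_⟩
    cases h1 with
    | node g1 g2 => cases g1; cases g2; exact Or.inl ⟨rfl, rfl⟩
    | swap g1 g2 => cases g1; cases g2; exact Or.inr ⟨rfl, rfl⟩
  | swap h1 h2 => cases h1

theorem iso_trip_comm (a b c : α) : Iso (tripletTree a b c) (tripletTree b a c) :=
  .node (.swap (.leaf a) (.leaf b)) (.leaf c)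

theorem isTripletOf_iff {T : LTree α} {a b c : α} :
    IsTripletOf T a b c ↔
      ∃ w, restrict T ({a, b, c} : Finset α) = some w ∧ Iso w (tripletTree a b c) := by
  unfold IsTripletOf
  rcases hw : restrict T ({a, b, c} : Finset α) with _ | w <;> simp [OptIso]

theorem IsTripletOf.comm {T : LTree α} {a b c : α} (h : IsTripletOf T a b c) :
    IsTripletOf T b a c := by
  rw [isTripletOf_iff] at h ⊢
  obtain ⟨w, hw, hiso⟩ := h
  have hset : ({b, a, c} : Finset α) = {a, b, c} := by
    ext z; simp; tauto
  rw [hset]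
  exact ⟨w, hw, hiso.trans (iso_trip_comm a b c)⟩

theorem trip_unique1 {T : LTree α} {a b c : α} (hbc : b ≠ c)
    (h1 : IsTripletOf T a b c) (h2 : IsTripletOf T a c b) : False := by
  rw [isTripletOf_iff] at h1 h2
  obtain ⟨w, hw, hiso⟩ := h1
  obtain ⟨w', hw', hiso'⟩ := h2
  have hset : ({a, c, b} : Finset α) = {a, b, c} := by ext z; simp; tauto
  rw [hset, hw] at hw'
  cases hw'
  have := iso_trip (hiso.symm.trans hiso')
  exact hbc this.1.symm

theorem trip_unique2 {T : LTree α} {a b c : α} (hac : a ≠ c)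
    (h1 : IsTripletOf T a b c) (h2 : IsTripletOf T b c a) : False := by
  rw [isTripletOf_iff] at h1 h2
  obtain ⟨w, hw, hiso⟩ := h1
  obtain ⟨w', hw', hiso'⟩ := h2
  have hset : ({b, c, a} : Finset α) = {a, b, c} := by ext z; simp; tauto
  rw [hset, hw] at hw'
  cases hw'
  have := iso_trip (hiso.symm.trans hiso')
  exact hac this.1.symm

theorem cross_triplet_left {l r : LTree α} (hg : Good (node l r)) {a b c : α}
    (ha : a ∈ labels l) (hb : b ∈ labels l) (hc : c ∈ labels r) (hab : a ≠ b) :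
    IsTripletOf (node l r) a b c := by
  obtain ⟨hgl, hgr, hdisj⟩ := hg
  have hacl : c ∉ labels l := Finset.disjoint_right.mp hdisj hc
  have hl := restrict_pair hgl (S := {a, b, c}) hab ha hb (by simp) (by simp)
    (fun z hz hzS => by
      rcases (by simpa using hzS : z = a ∨ z = b ∨ z = c) with rfl | rfl | rfl
      · exact Or.inl rfl
      · exact Or.inr rfl
      · exact absurd hz hacl)
  have hr := restrict_singleton hgr (S := {a, b, c}) hc (by simp)
    (fun z hz hzS => by
      rcases (by simpa using hzS : z = a ∨ z = b ∨ z = c) with rfl | rfl | rfl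
      · exact absurd hz (Finset.disjoint_left.mp hdisj ha)
      · exact absurd hz (Finset.disjoint_left.mp hdisj hb)
      · rfl)
  rw [isTripletOf_iff]
  rcases hl with hl | hl <;>
    refine ⟨_, by rw [restrict, hl, hr], ?_⟩ <;> unfold tripletTree
  · exact .node (.node (.leaf a) (.leaf b)) (.leaf c)
  · exact .node (.swap (.leaf b) (.leaf a)) (.leaf c)

theorem cross_triplet_right {l r : LTree α} (hg : Good (node l r)) {a b c : α}
    (ha : a ∈ labels r) (hb : b ∈ labels r) (hc : c ∈ labels l) (hab : a ≠ b) :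
    IsTripletOf (node l r) a b c := by
  obtain ⟨hgl, hgr, hdisj⟩ := hg
  have hl := restrict_singleton hgl (S := {a, b, c}) hc (by simp)
    (fun z hz hzS => by
      rcases (by simpa using hzS : z = a ∨ z = b ∨ z = c) with rfl | rfl | rfl
      · exact absurd hz (Finset.disjoint_right.mp hdisj ha)
      · exact absurd hz (Finset.disjoint_right.mp hdisj hb)
      · rfl)
  have hr := restrict_pair hgr (S := {a, b, c}) hab ha hb (by simp) (by simp)
    (fun z hz hzS => by
      rcases (by simpa using hzS : z = a ∨ z = b ∨ z = c) with rfl | rfl | rfl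
      · exact Or.inl rfl
      · exact Or.inr rfl
      · exact absurd hz (Finset.disjoint_left.mp hdisj hc))
  rw [isTripletOf_iff]
  rcases hr with hr | hr <;>
    refine ⟨_, by rw [restrict, hl, hr], ?_⟩ <;> unfold tripletTree
  · exact .swap (.leaf c) (.node (.leaf a) (.leaf b))
  · exact .swap (.leaf c) (.swap (.leaf b) (.leaf a))

theorem isTripletOf_node_left {l r : LTree α} {a b c : α}
    (h : ∀ z ∈ labels r, z ∉ ({a, b, c} : Finset α)) :
    IsTripletOf (node l r) a b c ↔ IsTripletOf l a b c := by
  unfold IsTripletOf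
  rw [restrict_node_left h]

theorem isTripletOf_node_right {l r : LTree α} {a b c : α}
    (h : ∀ z ∈ labels l, z ∉ ({a, b, c} : Finset α)) :
    IsTripletOf (node l r) a b c ↔ IsTripletOf r a b c := by
  unfold IsTripletOf
  rw [restrict_node_right h]

theorem trip_exists {T : LTree α} (hg : Good T) {a b c : α}
    (ha : a ∈ labels T) (hb : b ∈ labels T) (hc : c ∈ labels T)
    (hab : a ≠ b) (hac : a ≠ c) (hbc : b ≠ c) :
    IsTripletOf T a b c ∨ IsTripletOf T a c b ∨ IsTripletOf T b c a := by
  induction T with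
  | leaf x =>
    exfalso
    have h1 : a = x := by simpa [labels] using ha
    have h2 : b = x := by simpa [labels] using hb
    exact hab (h1.trans h2.symm)
  | node l r ihl ihr =>
    obtain ⟨hgl, hgr, hdisj⟩ := hg
    have hmem : ∀ z, z ∈ labels (node l r) → z ∈ labels l ∨ z ∈ labels r := by
      intro z hz; simpa [labels] using hz
    have hnotl : ∀ z, z ∈ labels r → z ∉ labels l := fun z hz =>
      Finset.disjoint_right.mp hdisj hz
    have hnotr : ∀ z, z ∈ labels l → z ∉ labels r := fun z hz =>
      Finset.disjoint_left.mp hdisj hz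
    rcases hmem a ha with hal | hal <;> rcases hmem b hb with hbl | hbl <;>
      rcases hmem c hc with hcl | hcl
    · -- all in l
      rcases ihl hgl hal hbl hcl with h | h | h
      · exact Or.inl ((isTripletOf_node_left (fun z hz hzs => by
          rcases (by simpa using hzs : z = a ∨ z = b ∨ z = c) with rfl | rfl | rfl <;>
            [exact hnotl _ hz hal; exact hnotl _ hz hbl; exact hnotl _ hz hcl])).mpr h)
      · refine Or.inr (Or.inl ((isTripletOf_node_left (fun z hz hzs => ?_)).mpr h))
        rcases (by simpa using hzs : z = a ∨ z = c ∨ z = b) with rfl | rfl | rfl <;>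
          [exact hnotl _ hz hal; exact hnotl _ hz hcl; exact hnotl _ hz hbl]
      · refine Or.inr (Or.inr ((isTripletOf_node_left (fun z hz hzs => ?_)).mpr h))
        rcases (by simpa using hzs : z = b ∨ z = c ∨ z = a) with rfl | rfl | rfl <;>
          [exact hnotl _ hz hbl; exact hnotl _ hz hcl; exact hnotl _ hz hal]
    · -- a b in l, c in r
      exact Or.inl (cross_triplet_left ⟨hgl, hgr, hdisj⟩ hal hbl hcl hab)
    · -- a c in l, b in r
      exact Or.inr (Or.inl (cross_triplet_left ⟨hgl, hgr, hdisj⟩ hal hcl hbl hac))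
    · -- a in l, b c in r
      exact Or.inr (Or.inr (cross_triplet_right ⟨hgl, hgr, hdisj⟩ hbl hcl hal hbc))
    · -- b c in l, a in r
      exact Or.inr (Or.inr (cross_triplet_left ⟨hgl, hgr, hdisj⟩ hbl hcl hal hbc))
    · -- a c in r, b in l
      exact Or.inr (Or.inl (cross_triplet_right ⟨hgl, hgr, hdisj⟩ hal hcl hbl hac))
    · -- a b in r, c in l
      exact Or.inl (cross_triplet_right ⟨hgl, hgr, hdisj⟩ hal hbl hcl hab)
    · -- all in r
      rcases ihr hgr hal hbl hcl with h | h | h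
      · exact Or.inl ((isTripletOf_node_right (fun z hz hzs => by
          rcases (by simpa using hzs : z = a ∨ z = b ∨ z = c) with rfl | rfl | rfl <;>
            [exact hnotr _ hz hal; exact hnotr _ hz hbl; exact hnotr _ hz hcl])).mpr h)
      · refine Or.inr (Or.inl ((isTripletOf_node_right (fun z hz hzs => ?_)).mpr h))
        rcases (by simpa using hzs : z = a ∨ z = c ∨ z = b) with rfl | rfl | rfl <;>
          [exact hnotr _ hz hal; exact hnotr _ hz hcl; exact hnotr _ hz hbl]
      · refine Or.inr (Or.inr ((isTripletOf_node_right (fun z hz hzs => ?_)).mpr h))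
        rcases (by simpa using hzs : z = b ∨ z = c ∨ z = a) with rfl | rfl | rfl <;>
          [exact hnotr _ hz hbl; exact hnotr _ hz hcl; exact hnotr _ hz hal]

end LTree
namespace LTree

variable {α : Type u} [DecidableEq α]

theorem not_split_triplet {l r : LTree α} (hg : Good (node l r)) {p q s : α}
    (hp : p ∈ labels l) (hq : q ∈ labels r) (hs : s ∈ labels (node l r))
    (hpq : p ≠ q) (hps : p ≠ s) (hqs : q ≠ s) :
    ¬ IsTripletOf (node l r) p q s := by
  intro h
  rcases (by simpa [labels] using hs : s ∈ labels l ∨ s ∈ labels r) with hsl | hsr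
  · exact trip_unique1 hqs h (cross_triplet_left hg hp hsl hq hps)
  · exact trip_unique2 hps h (cross_triplet_right hg hq hsr hp hqs)

theorem rule_tree {T : LTree α} (hg : Good T) {a b c d : α}
    (ha : a ∈ labels T) (hb : b ∈ labels T) (hc : c ∈ labels T) (hd : d ∈ labels T)
    (hab : a ≠ b) (hac : a ≠ c) (had : a ≠ d) (hbc : b ≠ c) (hbd : b ≠ d) (hcd : c ≠ d)
    (h1 : IsTripletOf T a b c) (h2 : IsTripletOf T c d b) :
    IsTripletOf T a b d := by
  induction T with
  | leaf x =>
    exact absurd ((by simpa [labels] using ha : a = x).trans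
      (by simpa [labels] using hb : b = x).symm) hab
  | node l r ihl ihr =>
    obtain ⟨hgl, hgr, hdisj⟩ := hg
    have hmem : ∀ z, z ∈ labels (node l r) → z ∈ labels l ∨ z ∈ labels r := by
      intro z hz; simpa [labels] using hz
    have hnotl : ∀ z, z ∈ labels r → z ∉ labels l := fun z hz =>
      Finset.disjoint_right.mp hdisj hz
    have hnotr : ∀ z, z ∈ labels l → z ∉ labels r := fun z hz =>
      Finset.disjoint_left.mp hdisj hz
    rcases hmem a ha with hal | har <;> rcases hmem b hb with hbl | hbr
    · -- a, b ∈ l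
      rcases hmem c hc with hcl | hcr
      · rcases hmem d hd with hdl | hdr
        · -- all in l
          have e1 := (isTripletOf_node_left (fun z hz hzs => by
            rcases (by simpa using hzs : z = a ∨ z = b ∨ z = c) with rfl | rfl | rfl <;>
              [exact hnotl _ hz hal; exact hnotl _ hz hbl; exact hnotl _ hz hcl])).mp h1
          have e2 := (isTripletOf_node_left (fun z hz hzs => by
            rcases (by simpa using hzs : z = c ∨ z = d ∨ z = b) with rfl | rfl | rfl <;>
              [exact hnotl _ hz hcl; exact hnotl _ hz hdl; exact hnotl _ hz hbl])).mp h2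
          exact (isTripletOf_node_left (fun z hz hzs => by
            rcases (by simpa using hzs : z = a ∨ z = b ∨ z = d) with rfl | rfl | rfl <;>
              [exact hnotl _ hz hal; exact hnotl _ hz hbl; exact hnotl _ hz hdl])).mpr
            (ihl hgl hal hbl hcl hdl e1 e2)
        · -- c ∈ l, d ∈ r : h2 split
          exact absurd h2 (not_split_triplet ⟨hgl, hgr, hdisj⟩ hcl hdr
            hb hcd hbc.symm hbd.symm)
      · rcases hmem d hd with hdl | hdr
        · -- c ∈ r, d ∈ l : h2.comm split
          exact absurd h2.comm (not_split_triplet ⟨hgl, hgr, hdisj⟩ hdl hcr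
            hb hcd.symm hbd.symm hbc.symm)
        · -- c, d ∈ r : goal by cross
          exact cross_triplet_left ⟨hgl, hgr, hdisj⟩ hal hbl hdr hab
    · -- a ∈ l, b ∈ r : h1 split
      exact absurd h1 (not_split_triplet ⟨hgl, hgr, hdisj⟩ hal hbr
        hc hab hac hbc)
    · -- a ∈ r, b ∈ l : h1.comm split
      exact absurd h1.comm (not_split_triplet ⟨hgl, hgr, hdisj⟩ hbl har
        hc hab.symm hbc hac)
    · -- a, b ∈ r
      rcases hmem c hc with hcl | hcr
      · rcases hmem d hd with hdl | hdr
        · -- c, d ∈ l : goal by cross right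
          exact cross_triplet_right ⟨hgl, hgr, hdisj⟩ har hbr hdl hab
        · -- c ∈ l, d ∈ r : h2 split
          exact absurd h2 (not_split_triplet ⟨hgl, hgr, hdisj⟩ hcl hdr
            hb hcd hbc.symm hbd.symm)
      · rcases hmem d hd with hdl | hdr
        · -- c ∈ r, d ∈ l : h2.comm split
          exact absurd h2.comm (not_split_triplet ⟨hgl, hgr, hdisj⟩ hdl hcr
            hb hcd.symm hbd.symm hbc.symm)
        · -- all in r
          have e1 := (isTripletOf_node_right (fun z hz hzs => by
            rcases (by simpa using hzs : z = a ∨ z = b ∨ z = c) with rfl | rfl | rfl <;>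
              [exact hnotr _ hz har; exact hnotr _ hz hbr; exact hnotr _ hz hcr])).mp h1
          have e2 := (isTripletOf_node_right (fun z hz hzs => by
            rcases (by simpa using hzs : z = c ∨ z = d ∨ z = b) with rfl | rfl | rfl <;>
              [exact hnotr _ hz hcr; exact hnotr _ hz hdr; exact hnotr _ hz hbr])).mp h2
          exact (isTripletOf_node_right (fun z hz hzs => by
            rcases (by simpa using hzs : z = a ∨ z = b ∨ z = d) with rfl | rfl | rfl <;>
              [exact hnotr _ hz har; exact hnotr _ hz hbr; exact hnotr _ hz hdr])).mpr
            (ihr hgr har hbr hcr hdr e1 e2)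

end LTree
section RLogic

open LTree

variable {α : Type u} [DecidableEq α] {𝒳 : Finset α} {R : α → α → α → Prop}

/-- The forbidden-configuration condition. -/
def Forb (𝒳 : Finset α) (R : α → α → α → Prop) : Prop :=
  ∀ a b c d : α, a ∈ 𝒳 → b ∈ 𝒳 → c ∈ 𝒳 → d ∈ 𝒳 →
    a ≠ b → a ≠ c → a ≠ d → b ≠ c → b ≠ d → c ≠ d →
    ¬(R a b c ∧ R c d b ∧ R b d a) ∧ ¬(R a b c ∧ R c d b ∧ R a d b)

variable (hFull : FullTriplets 𝒳 R)
include hFull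

theorem R_unique1 {a b c : α} (h1 : R a b c) (h2 : R a c b) : False := by
  obtain ⟨ha, hb, hc, hab, hac, hbc⟩ := hFull.2.1 a b c h1
  rcases hFull.2.2 a b c ha hb hc hab hac hbc with ⟨_, h, _⟩ | ⟨h, _, _⟩ | ⟨h, _, _⟩ <;>
    [exact h h2; exact h h1; exact h h1]

theorem R_unique2 {a b c : α} (h1 : R a b c) (h2 : R b c a) : False := by
  obtain ⟨ha, hb, hc, hab, hac, hbc⟩ := hFull.2.1 a b c h1
  rcases hFull.2.2 a b c ha hb hc hab hac hbc with ⟨_, _, h⟩ | ⟨h, _, _⟩ | ⟨h, _, _⟩ <;>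
    [exact h h2; exact h h1; exact h h1]

variable (hforb : Forb 𝒳 R)
include hforb

/-- The basic inference rule: `xy|z` and `zw|y` imply `xy|w`. -/
theorem ruleR {x y z w : α} (hxw : x ≠ w) (hyw : y ≠ w)
    (h1 : R x y z) (h2 : R z w y) : R x y w := by
  obtain ⟨hx, hy, hz, hxy, hxz, hyz⟩ := hFull.2.1 x y z h1
  obtain ⟨_, hw, _, hzw, _, hwy⟩ := hFull.2.1 z w y h2
  rcases hFull.2.2 x y w hx hy hw hxy hxw hyw with ⟨h, _, _⟩ | ⟨_, h, _⟩ | ⟨_, _, h⟩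
  · exact h
  · exact absurd ⟨h1, h2, h⟩ (hforb x y z w hx hy hz hw hxy hxz hxw hyz hyw hzw).2
  · exact absurd ⟨h1, h2, h⟩ (hforb x y z w hx hy hz hw hxy hxz hxw hyz hyw hzw).1

theorem ruleC1 {a a₀ b₀ x : α} (hax : a ≠ x) (hx : x ∈ 𝒳)
    (h1 : R a a₀ b₀) (h2 : R a₀ x b₀) : R a x b₀ := by
  obtain ⟨ha, ha₀, hb₀, haa₀, hab₀, ha₀b₀⟩ := hFull.2.1 a a₀ b₀ h1
  obtain ⟨_, _, _, ha₀x, _, hxb₀⟩ := hFull.2.1 a₀ x b₀ h2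
  rcases hFull.2.2 a x b₀ ha hx hb₀ hax hab₀ hxb₀.symm.symm with ⟨h, _, _⟩ | ⟨_, h, _⟩ | ⟨_, _, h⟩
  · exact h
  · -- h : R a b₀ x ; derive R a b₀ a₀, contradict R a a₀ b₀
    have := ruleR hFull hforb (x := a) (y := b₀) (z := x) (w := a₀)
      haa₀ ha₀b₀.symm h ((hFull.1 a₀ x b₀).mp h2)
    exact absurd this (fun hh => R_unique1 hFull h1 hh)
  · -- h : R x b₀ a ; derive R x b₀ a₀, contradict R x a₀ b₀
    have := ruleR hFull hforb (x := x) (y := b₀) (z := a) (w := a₀)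
      ha₀x.symm ha₀b₀.symm h h1
    exact absurd this (fun hh => R_unique1 hFull ((hFull.1 a₀ x b₀).mp h2) hh)

theorem ruleC2 {a b b₀ x : α} (hbx : b ≠ x)
    (h1 : R b b₀ a) (h2 : R a x b₀) : R a x b := by
  obtain ⟨hb, hb₀, ha, hbb₀, hba, hb₀a⟩ := hFull.2.1 b b₀ a h1
  obtain ⟨_, hx, _, hax, hab₀, hxb₀⟩ := hFull.2.1 a x b₀ h2
  have step1 : R b b₀ x := ruleR hFull hforb hbx (fun h => hxb₀ h.symm) h1 h2
  exact ruleR hFull hforb hba.symm hbx.symm h2 ((hFull.1 b b₀ x).mp step1)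

theorem ruleC3 {a a' b x : α}
    (h1 : R a a' b) (h2 : R a b x) (h3 : R a' b x) : R a a' x := by
  obtain ⟨ha, ha', hb, haa', hab, ha'b⟩ := hFull.2.1 a a' b h1
  obtain ⟨_, _, hx, _, hax, hbx⟩ := hFull.2.1 a b x h2
  obtain ⟨_, _, _, _, ha'x, _⟩ := hFull.2.1 a' b x h3
  rcases hFull.2.2 a a' x ha ha' hx haa' hax ha'x with ⟨h, _, _⟩ | ⟨_, h, _⟩ | ⟨_, _, h⟩
  · exact h
  · -- h : R a x a' ; with a'b|x get ax|b, contradict ab|x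
    have := ruleR hFull hforb hab hbx.symm h h3
    exact absurd this (fun hh => R_unique1 hFull h2 hh)
  · -- h : R a' x a ; with ab|x get a'x|b, contradict a'b|x
    have := ruleR hFull hforb ha'b hbx.symm h h2
    exact absurd this (fun hh => R_unique1 hFull h3 hh)

end RLogic
section Insertion

open LTree

variable {α : Type u} [DecidableEq α]

open Classical in
/-- Insert the new label `x` into a tree, guided by the triplet set `R`. -/
noncomputable def insTree (R : α → α → α → Prop) (x : α) : LTree α → LTree α
  | .leaf a => .node (.leaf x) (.leaf a)
  | .node l r =>
    if ∃ p ∈ labels l, ∃ q ∈ labels r, R p x q then .node (insTree R x l) r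
    else if ∃ p ∈ labels l, ∃ q ∈ labels r, R q x p then .node l (insTree R x r)
    else .node (.leaf x) (.node l r)

variable {R : α → α → α → Prop} {x : α}

theorem ins_labels (R : α → α → α → Prop) (x : α) :
    ∀ u : LTree α, labels (insTree R x u) = insert x (labels u) := by
  intro u
  induction u with
  | leaf a => simp [insTree, labels]
  | node l r ihl ihr =>
    rw [insTree]
    split_ifs with h1 h2 <;>
      · ext z; simp [labels, ihl, ihr]; try tauto

theorem ins_good {u : LTree α} (hxu : x ∉ labels u) (hg : Good u) :
    Good (insTree R x u) := by
  induction u with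
  | leaf a =>
    refine ⟨trivial, trivial, ?_⟩
    simp [labels]
    intro h
    exact hxu (by simp [labels, h])
  | node l r ihl ihr =>
    obtain ⟨hgl, hgr, hdisj⟩ := hg
    have hxl : x ∉ labels l := fun h => hxu (by simp [labels, h])
    have hxr : x ∉ labels r := fun h => hxu (by simp [labels, h])
    rw [insTree]
    split_ifs with h1 h2
    · exact ⟨ihl hxl hgl, hgr, by
        rw [ins_labels]
        exact Finset.disjoint_insert_left.mpr ⟨hxr, hdisj⟩⟩
    · exact ⟨hgl, ihr hxr hgr, by
        rw [ins_labels]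
        exact Finset.disjoint_insert_right.mpr ⟨hxl, hdisj⟩⟩
    · refine ⟨trivial, ⟨hgl, hgr, hdisj⟩, ?_⟩
      simp only [labels, Finset.disjoint_singleton_left, Finset.mem_union]
      exact fun h => hxu (by simpa [labels] using h)

theorem ins_restrict {S : Finset α} (hxS : x ∉ S) :
    ∀ u : LTree α, restrict (insTree R x u) S = restrict u S := by
  intro u
  induction u with
  | leaf a =>
    rw [insTree]
    exact restrict_node_right (fun z hz => by
      have : z = x := by simpa [labels] using hz
      subst this; exact hxS)
  | node l r ihl ihr =>
    rw [insTree]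
    split_ifs with h1 h2
    · show restrict (node (insTree R x l) r) S = restrict (node l r) S
      rw [restrict, restrict, ihl]
    · show restrict (node l (insTree R x r)) S = restrict (node l r) S
      rw [restrict, restrict, ihr]
    · exact restrict_node_right (fun z hz => by
        have : z = x := by simpa [labels] using hz
        subst this; exact hxS)

variable {𝒳 : Finset α}
variable (hFull : FullTriplets 𝒳 R) (hforb : Forb 𝒳 R)
include hFull hforb

theorem ins_spec (hx𝒳 : x ∈ 𝒳) (u : LTree α) :
    Good u → labels u ⊆ 𝒳 → x ∉ labels u →
    (∀ p q s, p ∈ labels u → q ∈ labels u → s ∈ labels u →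
      p ≠ q → p ≠ s → q ≠ s → (R p q s ↔ IsTripletOf u p q s)) →
    ∀ a b, a ∈ labels u → b ∈ labels u → a ≠ b →
      (R a x b → IsTripletOf (insTree R x u) a x b) ∧
      (R a b x → IsTripletOf (insTree R x u) a b x) := by
  induction u with
  | leaf q =>
    intro _ _ _ _ a b ha hb hab
    exact absurd ((by simpa [labels] using ha : a = q).trans
      (by simpa [labels] using hb : b = q).symm) hab
  | node l r ihl ihr =>
    intro hg hsub hxu Hu a b ha hb hab
    obtain ⟨hgl, hgr, hdisj⟩ := hg
    have ml : ∀ {z : α}, z ∈ labels l → z ∈ labels (node l r) := fun h => by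
      simp [labels, h]
    have mr : ∀ {z : α}, z ∈ labels r → z ∈ labels (node l r) := fun h => by
      simp [labels, h]
    have hxl : x ∉ labels l := fun h => hxu (ml h)
    have hxr : x ∉ labels r := fun h => hxu (mr h)
    have dlr : ∀ {p q : α}, p ∈ labels l → q ∈ labels r → p ≠ q := fun hp hq e =>
      Finset.disjoint_left.mp hdisj hp (e ▸ hq)
    have xne : ∀ {z : α}, z ∈ labels (node l r) → z ≠ x := fun hz e => hxu (e ▸ hz)
    have crossL : ∀ p q s, p ∈ labels l → q ∈ labels l → s ∈ labels r → p ≠ q →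
        R p q s := fun p q s hp hq hs hpq =>
      (Hu p q s (ml hp) (ml hq) (mr hs) hpq (dlr hp hs) (dlr hq hs)).mpr
        (cross_triplet_left ⟨hgl, hgr, hdisj⟩ hp hq hs hpq)
    have crossR : ∀ p q s, p ∈ labels r → q ∈ labels r → s ∈ labels l → p ≠ q →
        R p q s := fun p q s hp hq hs hpq =>
      (Hu p q s (mr hp) (mr hq) (ml hs) hpq (dlr hs hp).symm (dlr hs hq).symm).mpr
        (cross_triplet_right ⟨hgl, hgr, hdisj⟩ hp hq hs hpq)
    have Hul : ∀ p q s, p ∈ labels l → q ∈ labels l → s ∈ labels l →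
        p ≠ q → p ≠ s → q ≠ s → (R p q s ↔ IsTripletOf l p q s) := by
      intro p q s hp hq hs hpq hps hqs
      rw [Hu p q s (ml hp) (ml hq) (ml hs) hpq hps hqs]
      exact isTripletOf_node_left (fun z hz hzs => by
        rcases (by simpa using hzs : z = p ∨ z = q ∨ z = s) with rfl | rfl | rfl <;>
          exact Finset.disjoint_right.mp hdisj hz ‹_ ∈ labels l›)
    have Hur : ∀ p q s, p ∈ labels r → q ∈ labels r → s ∈ labels r →
        p ≠ q → p ≠ s → q ≠ s → (R p q s ↔ IsTripletOf r p q s) := by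
      intro p q s hp hq hs hpq hps hqs
      rw [Hu p q s (mr hp) (mr hq) (mr hs) hpq hps hqs]
      exact isTripletOf_node_right (fun z hz hzs => by
        rcases (by simpa using hzs : z = p ∨ z = q ∨ z = s) with rfl | rfl | rfl <;>
          exact Finset.disjoint_left.mp hdisj hz ‹_ ∈ labels r›)
    have hsubl : labels l ⊆ 𝒳 := fun z hz => hsub (ml hz)
    have hsubr : labels r ⊆ 𝒳 := fun z hz => hsub (mr hz)
    by_cases hc1 : ∃ p ∈ labels l, ∃ q ∈ labels r, R p x q
    · obtain ⟨a₀, ha₀, b₀, hb₀, hw⟩ := hc1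
      have heq : insTree R x (node l r) = node (insTree R x l) r := by
        rw [insTree, if_pos ⟨a₀, ha₀, b₀, hb₀, hw⟩]
      have P1 : ∀ p ∈ labels l, R p x b₀ := by
        intro p hp
        by_cases hpa : p = a₀
        · subst hpa; exact hw
        · exact ruleC1 hFull hforb (xne (ml hp)) hx𝒳 (crossL p a₀ b₀ hp ha₀ hb₀ hpa) hw
      have P2 : ∀ p ∈ labels l, ∀ q ∈ labels r, R p x q := by
        intro p hp q hq
        by_cases hqb : q = b₀
        · subst hqb; exact P1 p hp
        · exact ruleC2 hFull hforb (xne (mr hq)) (crossR q b₀ p hq hb₀ hp hqb) (P1 p hp)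
      have P3 : ∀ p ∈ labels r, ∀ q ∈ labels r, p ≠ q → R p q x := by
        intro p hp q hq hpq
        exact ruleR hFull hforb (xne (mr hp)) (xne (mr hq))
          (crossR p q a₀ hp hq ha₀ hpq) (P2 a₀ ha₀ q hq)
      have hgood' : Good (node (insTree R x l) r) :=
        ⟨ins_good hxl hgl, hgr, by
          rw [ins_labels]; exact Finset.disjoint_insert_left.mpr ⟨hxr, hdisj⟩⟩
      rw [heq]
      rcases (by simpa [labels] using ha : a ∈ labels l ∨ a ∈ labels r) with hal | har <;>
        rcases (by simpa [labels] using hb : b ∈ labels l ∨ b ∈ labels r) with hbl | hbr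
      · -- a, b ∈ l : use IH
        have IH := ihl hgl hsubl hxl Hul a b hal hbl hab
        constructor
        · intro h
          exact (isTripletOf_node_left (fun z hz hzs => by
            rcases (by simpa using hzs : z = a ∨ z = x ∨ z = b) with rfl | rfl | rfl <;>
              [exact (dlr hal hz).symm rfl; exact hxr hz; exact (dlr hbl hz).symm rfl])).mpr
            (IH.1 h)
        · intro h
          exact (isTripletOf_node_left (fun z hz hzs => by
            rcases (by simpa using hzs : z = a ∨ z = b ∨ z = x) with rfl | rfl | rfl <;>
              [exact (dlr hal hz).symm rfl; exact (dlr hbl hz).symm rfl; exact hxr hz])).mpr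
            (IH.2 h)
      · -- a ∈ l, b ∈ r
        have hR := P2 a hal b hbr
        constructor
        · intro _
          exact cross_triplet_left hgood'
            (by rw [ins_labels]; exact Finset.mem_insert_of_mem hal)
            (by rw [ins_labels]; exact Finset.mem_insert_self x _) hbr (xne (ml hal))
        · intro h
          exact (R_unique1 hFull h hR).elim
      · -- a ∈ r, b ∈ l
        have hR := P2 b hbl a har
        constructor
        · intro h
          exact (R_unique2 hFull h ((hFull.1 b x a).mp hR)).elim
        · intro h
          exact (R_unique2 hFull h hR).elim
      · -- a, b ∈ r
        have hR := P3 a har b hbr hab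
        constructor
        · intro h
          exact (R_unique1 hFull hR h).elim
        · intro _
          exact cross_triplet_right hgood' har hbr
            (by rw [ins_labels]; exact Finset.mem_insert_self x _) hab
    · by_cases hc2 : ∃ p ∈ labels l, ∃ q ∈ labels r, R q x p
      · obtain ⟨a₀, ha₀, b₀, hb₀, hw⟩ := hc2
        have heq : insTree R x (node l r) = node l (insTree R x r) := by
          rw [insTree, if_neg hc1, if_pos ⟨a₀, ha₀, b₀, hb₀, hw⟩]
        have Q1 : ∀ q ∈ labels r, R q x a₀ := by
          intro q hq
          by_cases hqb : q = b₀
          · subst hqb; exact hw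
          · exact ruleC1 hFull hforb (xne (mr hq)) hx𝒳 (crossR q b₀ a₀ hq hb₀ ha₀ hqb) hw
        have Q2 : ∀ q ∈ labels r, ∀ p ∈ labels l, R q x p := by
          intro q hq p hp
          by_cases hpa : p = a₀
          · subst hpa; exact Q1 q hq
          · exact ruleC2 hFull hforb (xne (ml hp)) (crossL p a₀ q hp ha₀ hq hpa) (Q1 q hq)
        have Q3 : ∀ p ∈ labels l, ∀ q ∈ labels l, p ≠ q → R p q x := by
          intro p hp q hq hpq
          exact ruleR hFull hforb (xne (ml hp)) (xne (ml hq))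
            (crossL p q b₀ hp hq hb₀ hpq) (Q2 b₀ hb₀ q hq)
        have hgood' : Good (node l (insTree R x r)) :=
          ⟨hgl, ins_good hxr hgr, by
            rw [ins_labels]; exact Finset.disjoint_insert_right.mpr ⟨hxl, hdisj⟩⟩
        rw [heq]
        rcases (by simpa [labels] using ha : a ∈ labels l ∨ a ∈ labels r) with hal | har <;>
          rcases (by simpa [labels] using hb : b ∈ labels l ∨ b ∈ labels r) with hbl | hbr
        · -- a, b ∈ l
          have hR := Q3 a hal b hbl hab
          constructor
          · intro h
            exact (R_unique1 hFull hR h).elim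
          · intro _
            exact cross_triplet_left hgood' hal hbl
              (by rw [ins_labels]; exact Finset.mem_insert_self x _) hab
        · -- a ∈ l, b ∈ r
          have hR := Q2 b hbr a hal
          constructor
          · intro h
            exact (R_unique2 hFull h ((hFull.1 b x a).mp hR)).elim
          · intro h
            exact (R_unique2 hFull h hR).elim
        · -- a ∈ r, b ∈ l
          have hR := Q2 a har b hbl
          constructor
          · intro _
            exact cross_triplet_right hgood'
              (by rw [ins_labels]; exact Finset.mem_insert_of_mem har)
              (by rw [ins_labels]; exact Finset.mem_insert_self x _) hbl (xne (mr har))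
          · intro h
            exact (R_unique1 hFull h hR).elim
        · -- a, b ∈ r
          have IH := ihr hgr hsubr hxr Hur a b har hbr hab
          constructor
          · intro h
            exact (isTripletOf_node_right (fun z hz hzs => by
              rcases (by simpa using hzs : z = a ∨ z = x ∨ z = b) with rfl | rfl | rfl <;>
                [exact dlr hz har rfl; exact hxl hz; exact dlr hz hbr rfl])).mpr
              (IH.1 h)
          · intro h
            exact (isTripletOf_node_right (fun z hz hzs => by
              rcases (by simpa using hzs : z = a ∨ z = b ∨ z = x) with rfl | rfl | rfl <;>
                [exact dlr hz har rfl; exact dlr hz hbr rfl; exact hxl hz])).mpr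
              (IH.2 h)
      · have heq : insTree R x (node l r) = node (.leaf x) (node l r) := by
          rw [insTree, if_neg hc1, if_neg hc2]
        have S1 : ∀ p ∈ labels l, ∀ q ∈ labels r, R p q x := by
          intro p hp q hq
          rcases hFull.2.2 p q x (hsubl hp) (hsubr hq) hx𝒳 (dlr hp hq)
            (xne (ml hp)) (xne (mr hq)) with ⟨h, _, _⟩ | ⟨_, h, _⟩ | ⟨_, _, h⟩
          · exact h
          · exact absurd ⟨p, hp, q, hq, h⟩ hc1
          · exact absurd ⟨p, hp, q, hq, h⟩ hc2
        have S2 : ∀ p ∈ labels l, ∀ q ∈ labels l, p ≠ q → R p q x := by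
          intro p hp q hq hpq
          obtain ⟨w, hwr⟩ := labels_nonempty r
          exact ruleC3 hFull hforb (crossL p q w hp hq hwr hpq) (S1 p hp w hwr)
            (S1 q hq w hwr)
        have S3 : ∀ p ∈ labels r, ∀ q ∈ labels r, p ≠ q → R p q x := by
          intro p hp q hq hpq
          obtain ⟨w, hwl⟩ := labels_nonempty l
          exact ruleC3 hFull hforb (crossR p q w hp hq hwl hpq)
            ((hFull.1 w p x).mp (S1 w hwl p hp)) ((hFull.1 w q x).mp (S1 w hwl q hq))
        have Sall : R a b x := by
          rcases (by simpa [labels] using ha : a ∈ labels l ∨ a ∈ labels r) with hal | har <;>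
            rcases (by simpa [labels] using hb : b ∈ labels l ∨ b ∈ labels r) with hbl | hbr
          · exact S2 a hal b hbl hab
          · exact S1 a hal b hbr
          · exact (hFull.1 b a x).mp (S1 b hbl a har)
          · exact S3 a har b hbr hab
        rw [heq]
        have hgood' : Good (node (.leaf x) (node l r)) := by
          refine ⟨trivial, ⟨hgl, hgr, hdisj⟩, ?_⟩
          simp only [labels, Finset.disjoint_singleton_left, Finset.mem_union]
          exact fun h => hxu (by simpa [labels] using h)
        constructor
        · intro h
          exact (R_unique1 hFull h Sall).elim
        · intro _
          exact cross_triplet_right hgood' ha hb (by simp [labels]) hab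

end Insertion
section Build

open LTree

variable {α : Type u} [DecidableEq α]

theorem build_tree : ∀ (n : ℕ) (𝒳 : Finset α) (R : α → α → α → Prop),
    𝒳.card = n → 𝒳.Nonempty → FullTriplets 𝒳 R → Forb 𝒳 R →
    ∃ T : LTree α, Good T ∧ labels T = 𝒳 ∧ ∀ a b c, R a b c → IsTripletOf T a b c := by
  intro n
  induction n with
  | zero =>
    intro 𝒳 R hcard hne _ _
    rw [Finset.card_eq_zero] at hcard
    subst hcard
    exact absurd hne (by simp)
  | succ n ih =>
    intro 𝒳 R hcard hne hFull hforb
    by_cases h1 : n = 0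
    · subst h1
      obtain ⟨y, rfl⟩ := Finset.card_eq_one.mp hcard
      refine ⟨.leaf y, trivial, by simp [labels], ?_⟩
      intro a b c hR
      obtain ⟨ha, hb, _, hab, _, _⟩ := hFull.2.1 a b c hR
      exact absurd ((by simpa using ha : a = y).trans (by simpa using hb : b = y).symm) hab
    · obtain ⟨x, hx⟩ := hne
      set 𝒳' := 𝒳.erase x with h𝒳'
      have hcard' : 𝒳'.card = n := by
        rw [h𝒳', Finset.card_erase_of_mem hx, hcard]
        omega
      have hne' : 𝒳'.Nonempty :=
        Finset.card_pos.mp (hcard' ▸ Nat.pos_of_ne_zero h1)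
      set R' := fun a b c => R a b c ∧ a ∈ 𝒳' ∧ b ∈ 𝒳' ∧ c ∈ 𝒳' with hR'
      have hsub𝒳 : 𝒳' ⊆ 𝒳 := Finset.erase_subset _ _
      have hFull' : FullTriplets 𝒳' R' := by
        refine ⟨?_, ?_, ?_⟩
        · rintro a b c
          constructor
          · rintro ⟨h, h1, h2, h3⟩; exact ⟨(hFull.1 a b c).mp h, h2, h1, h3⟩
          · rintro ⟨h, h1, h2, h3⟩; exact ⟨(hFull.1 a b c).mpr h, h2, h1, h3⟩
        · rintro a b c ⟨h, h1, h2, h3⟩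
          obtain ⟨_, _, _, hd⟩ := hFull.2.1 a b c h
          exact ⟨h1, h2, h3, hd⟩
        · intro a b c ha hb hc hab hac hbc
          rcases hFull.2.2 a b c (hsub𝒳 ha) (hsub𝒳 hb) (hsub𝒳 hc) hab hac hbc with
            ⟨h, g1, g2⟩ | ⟨g1, h, g2⟩ | ⟨g1, g2, h⟩
          · exact Or.inl ⟨⟨h, ha, hb, hc⟩, fun hh => g1 hh.1, fun hh => g2 hh.1⟩
          · exact Or.inr (Or.inl ⟨fun hh => g1 hh.1, ⟨h, ha, hc, hb⟩, fun hh => g2 hh.1⟩)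
          · exact Or.inr (Or.inr ⟨fun hh => g1 hh.1, fun hh => g2 hh.1, ⟨h, hb, hc, ha⟩⟩)
      have hforb' : Forb 𝒳' R' := by
        intro a b c d ha hb hc hd hab hac had hbc hbd hcd
        have := hforb a b c d (hsub𝒳 ha) (hsub𝒳 hb) (hsub𝒳 hc) (hsub𝒳 hd)
          hab hac had hbc hbd hcd
        exact ⟨fun ⟨g1, g2, g3⟩ => this.1 ⟨g1.1, g2.1, g3.1⟩,
          fun ⟨g1, g2, g3⟩ => this.2 ⟨g1.1, g2.1, g3.1⟩⟩
      obtain ⟨T', hgT', hlT', hdT'⟩ := ih 𝒳' R' hcard' hne' hFull' hforb'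
      have hsub' : labels T' ⊆ 𝒳 := by rw [hlT']; exact hsub𝒳
      have hxT' : x ∉ labels T' := by rw [hlT']; exact Finset.notMem_erase _ _
      have mem' : ∀ {z : α}, z ∈ 𝒳 → z ≠ x → z ∈ labels T' := by
        intro z hz hzx
        rw [hlT']
        exact Finset.mem_erase.mpr ⟨hzx, hz⟩
      have Hu : ∀ p q s, p ∈ labels T' → q ∈ labels T' → s ∈ labels T' →
          p ≠ q → p ≠ s → q ≠ s → (R p q s ↔ IsTripletOf T' p q s) := by
        intro p q s hp hq hs hpq hps hqs
        constructor
        · intro h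
          exact hdT' p q s ⟨h, hlT' ▸ hp, hlT' ▸ hq, hlT' ▸ hs⟩
        · intro h
          rcases hFull.2.2 p q s (hsub' hp) (hsub' hq) (hsub' hs) hpq hps hqs with
            ⟨g, _, _⟩ | ⟨_, g, _⟩ | ⟨_, _, g⟩
          · exact g
          · exact absurd (hdT' p s q ⟨g, hlT' ▸ hp, hlT' ▸ hs, hlT' ▸ hq⟩)
              (fun hh => trip_unique1 hqs h hh)
          · exact absurd (hdT' q s p ⟨g, hlT' ▸ hq, hlT' ▸ hs, hlT' ▸ hp⟩)
              (fun hh => trip_unique2 hps h hh)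
      have spec := ins_spec hFull hforb hx T' hgT' hsub' hxT' Hu
      refine ⟨insTree R x T', ins_good hxT' hgT', ?_, ?_⟩
      · rw [ins_labels, hlT', h𝒳', Finset.insert_erase hx]
      · intro a b c hR
        obtain ⟨ha, hb, hc, hab, hac, hbc⟩ := hFull.2.1 a b c hR
        by_cases hcx : c = x
        · subst hcx
          exact (spec a b (mem' ha hac) (mem' hb hbc) hab).2 hR
        · by_cases hbx : b = x
          · subst hbx
            exact (spec a c (mem' ha hab) (mem' hc (fun e => hcx e)) hac).1 hR
          · by_cases hax : a = x
            · have hR2 : R b x c := hax ▸ (hFull.1 a b c).mp hR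
              have hres := ((spec b c (mem' hb hbx) (mem' hc hcx) hbc).1 hR2).comm
              rw [hax]
              exact hres
            · have ht : IsTripletOf T' a b c :=
                hdT' a b c ⟨hR, Finset.mem_erase.mpr ⟨hax, ha⟩, Finset.mem_erase.mpr ⟨hbx, hb⟩, Finset.mem_erase.mpr ⟨hcx, hc⟩⟩
              have hxnot : x ∉ ({a, b, c} : Finset α) := by
                simp only [Finset.mem_insert, Finset.mem_singleton]
                rintro (rfl | rfl | rfl) <;> [exact hax rfl; exact hbx rfl; exact hcx rfl]
              unfold IsTripletOf at ht ⊢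
              rw [ins_restrict hxnot]
              exact ht

end Build
/-- Guillemot–Mnich.  A full set of triplets `ℛ` on `𝒳` is
compatible iff for every four labels `{a,b,c,d} ⊆ 𝒳` it contains neither
`{ab|c, cd|b, bd|a}` nor `{ab|c, cd|b, ad|b}`. -/
theorem full_triplets_compatible_iff {α : Type u} [DecidableEq α]
    (𝒳 : Finset α) (hNe : 𝒳.Nonempty) (R : α → α → α → Prop)
    (hFull : FullTriplets 𝒳 R) :
    TripletsCompatible 𝒳 R ↔
      ∀ a b c d : α, a ∈ 𝒳 → b ∈ 𝒳 → c ∈ 𝒳 → d ∈ 𝒳 →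
        a ≠ b → a ≠ c → a ≠ d → b ≠ c → b ≠ d → c ≠ d →
        ¬(R a b c ∧ R c d b ∧ R b d a) ∧ ¬(R a b c ∧ R c d b ∧ R a d b) := by
  constructor
  · rintro ⟨T, ⟨hgT, hlT⟩, hdisp⟩ a b c d ha hb hc hd hab hac had hbc hbd hcd
    have mem : ∀ {z : α}, z ∈ 𝒳 → z ∈ labels T := fun hz => by rw [hlT]; exact hz
    constructor
    · rintro ⟨h1, h2, h3⟩
      have t4 := rule_tree hgT (mem ha) (mem hb) (mem hc) (mem hd)
        hab hac had hbc hbd hcd (hdisp _ _ _ h1) (hdisp _ _ _ h2)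
      exact trip_unique2 had t4 (hdisp _ _ _ h3)
    · rintro ⟨h1, h2, h3⟩
      have t4 := rule_tree hgT (mem ha) (mem hb) (mem hc) (mem hd)
        hab hac had hbc hbd hcd (hdisp _ _ _ h1) (hdisp _ _ _ h2)
      exact trip_unique1 hbd t4 (hdisp _ _ _ h3)
  · intro h
    obtain ⟨T, hg, hl, hd⟩ := build_tree 𝒳.card 𝒳 R rfl hNe hFull h
    exact ⟨T, ⟨hg, hl⟩, hd⟩
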